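/- arXiv:2205.15993 — 2 statements merged into one kernel-verified Lean document; each statement's English description precedes it below -/
import Mathlib

section
/- Consider the semilinear evolution equation ẋ(t)=Ax(t)+f(t,x(t),u(t)) on a Banach space X, where A generates a C0-semigroup T(·) with ‖T(t)‖ ≤ Me^{wt} (M≥1, w≥0) and f satisfies conditions (SL1), (SL2), (SL3) and (SL4); let γ∈K∞ be from (SL3). Then for every r>0 and η>0 there exist L=L(r)≥0 (the Lipschitz constant from (SL2)) and k=k(r,η)>0 such that: if x(·) and z(·) are mild solutions with the same initial time t0≥0 and initial datum x0∈X, corresponding respectively to a piecewise continuous input u and to the zero input, and if for some t*>t0 one has ‖x(t)‖ ≤ r and ‖z(t)‖ ≤ r for all t∈[t0,t*], then for all t∈[t0,t*]: ‖x(t)−z(t)‖ ≤ [η(t−t0)+k∫_{t0}^{t} γ(‖u(s)‖)ds] · M e^{w(t−t0)} · e^{LM e^{w(t−t0)} (t−t0)}. -/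
open Set Filter MeasureTheory

/-- A function of class `K`. -/
def ClassK (α : ℝ → ℝ) : Prop :=
  ContinuousOn α (Ici 0) ∧ StrictMonoOn α (Ici 0) ∧ α 0 = 0

/-- A function of class `K∞`. -/
def ClassKInf (α : ℝ → ℝ) : Prop := ClassK α ∧ Tendsto α atTop atTop

/-- A function of class `KL`. -/
def ClassKL (β : ℝ → ℝ → ℝ) : Prop :=
  (∀ t ≥ (0:ℝ), ClassK (fun r => β r t)) ∧
  (∀ r ≥ (0:ℝ), AntitoneOn (fun t => β r t) (Ici 0) ∧
    Tendsto (fun t => β r t) atTop (nhds 0))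

/-- A strongly continuous semigroup of bounded linear operators on `X`. -/
structure C0Semigroup (X : Type*) [NormedAddCommGroup X] [NormedSpace ℝ X] where
  T : ℝ → X →L[ℝ] X
  map_zero : T 0 = ContinuousLinearMap.id ℝ X
  map_add : ∀ s t : ℝ, 0 ≤ s → 0 ≤ t → T (s + t) = (T s).comp (T t)
  strong_cont : ∀ x : X, ContinuousOn (fun t => T t x) (Ici 0)

variable {X Uv : Type*} [NormedAddCommGroup X] [NormedSpace ℝ X] [CompleteSpace X]
  [NormedAddCommGroup Uv] [NormedSpace ℝ Uv]

/-- A piecewise continuous function `u : [0,∞) → Uv`. -/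
def PWCont (u : ℝ → Uv) : Prop :=
  ∃ σ : ℕ → ℝ, σ 0 = 0 ∧ StrictMono σ ∧ Tendsto σ atTop atTop ∧
    ∀ k : ℕ, ∃ v : ℝ → Uv, ContinuousOn v (Icc (σ k) (σ (k + 1))) ∧
      ∀ t ∈ Ico (σ k) (σ (k + 1)), u t = v t

/-- Condition (SL1): `f` is piecewise continuous in `t` and continuous in its other
variables. -/
def CondSL1 (f : ℝ → X → Uv → X) : Prop :=
  ∃ σ : ℕ → ℝ, σ 0 = 0 ∧ StrictMono σ ∧ Tendsto σ atTop atTop ∧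
    ∀ k : ℕ, ∃ g : ℝ → X → Uv → X,
      ContinuousOn (fun p : ℝ × X × Uv => g p.1 p.2.1 p.2.2)
        {p : ℝ × X × Uv | p.1 ∈ Icc (σ k) (σ (k + 1))} ∧
      ∀ t ∈ Ico (σ k) (σ (k + 1)), ∀ (ξ : X) (μ : Uv), f t ξ μ = g t ξ μ

/-- `L` is a Lipschitz constant for `f(t, ·, μ)` on the ball of radius `r`, uniformly in
`t ≥ 0` and in `‖μ‖ ≤ r`. -/
def CondSL2With (f : ℝ → X → Uv → X) (r L : ℝ) : Prop :=
  ∀ t ≥ (0:ℝ), ∀ (ξ ω : X) (μ : Uv), ‖ξ‖ ≤ r → ‖ω‖ ≤ r → ‖μ‖ ≤ r →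
    ‖f t ξ μ - f t ω μ‖ ≤ L * ‖ξ - ω‖

/-- Condition (SL2): `f(t,ξ,μ)` is Lipschitz in `ξ` on bounded sets, uniformly in `t` and
for `μ` in bounded sets. -/
def CondSL2 (f : ℝ → X → Uv → X) : Prop :=
  ∀ r > (0:ℝ), ∃ L, 0 ≤ L ∧ CondSL2With f r L

/-- Condition (SL3), with the bound witnessed by `γ ∈ K∞` and a nondecreasing
`N : [0,∞) → (0,∞)`. -/
def CondSL3With (f : ℝ → X → Uv → X) (γ N : ℝ → ℝ) : Prop :=
  ClassKInf γ ∧ MonotoneOn N (Ici 0) ∧ (∀ r ≥ (0:ℝ), 0 < N r) ∧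
    ∀ t ≥ (0:ℝ), ∀ (ξ : X) (μ : Uv), ‖f t ξ μ‖ ≤ N ‖ξ‖ * (1 + γ ‖μ‖)

/-- Condition (SL3). -/
def CondSL3 (f : ℝ → X → Uv → X) : Prop := ∃ γ N, CondSL3With f γ N

/-- Condition (SL4): continuity in the input at the zero input, uniformly in time and on
bounded sets of states. -/
def CondSL4 (f : ℝ → X → Uv → X) : Prop :=
  ∀ r > (0:ℝ), ∀ ε > (0:ℝ), ∃ δ > (0:ℝ),
    ∀ t ≥ (0:ℝ), ∀ (ξ : X) (μ : Uv), ‖ξ‖ ≤ r → ‖μ‖ ≤ δ →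
      ‖f t ξ μ - f t ξ 0‖ < ε

/-- `x` is a mild (weak) solution of `ẋ = Ax + f(t,x,u(t))` on the interval `[t0, T]`. -/
def IsMild (Tg : C0Semigroup X) (f : ℝ → X → Uv → X) (u : ℝ → Uv)
    (t0 T : ℝ) (x : ℝ → X) : Prop :=
  ContinuousOn x (Icc t0 T) ∧
    ∀ t ∈ Icc t0 T,
      x t = Tg.T (t - t0) (x t0) + ∫ s in t0..t, Tg.T (t - s) (f s (x s) (u s))


section AuxLemmas

variable {X Uv : Type*} [NormedAddCommGroup X] [NormedSpace ℝ X] [CompleteSpace X]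
  [NormedAddCommGroup Uv] [NormedSpace ℝ Uv]

lemma aux_exists_piece (σ : ℕ → ℝ) (h0 : σ 0 = 0) (ht : Tendsto σ atTop atTop)
    {τ : ℝ} (hτ : 0 ≤ τ) : ∃ k, τ ∈ Ico (σ k) (σ (k + 1)) := by
  classical
  have hne : ∃ n, τ < σ n := (ht.eventually (eventually_gt_atTop τ)).exists
  have hn : τ < σ (Nat.find hne) := Nat.find_spec hne
  have hn0 : Nat.find hne ≠ 0 := by
    intro h
    rw [h, h0] at hn
    exact absurd hτ (not_le.2 hn)
  obtain ⟨k, hk⟩ := Nat.exists_eq_succ_of_ne_zero hn0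
  refine ⟨k, le_of_not_gt (Nat.find_min hne ?_), ?_⟩
  · omega
  · have : Nat.find hne = k + 1 := hk
    rw [← this]; exact hn

lemma aux_pw_integrable {E : Type*} [NormedAddCommGroup E]
    (g : ℝ → E) (σ : ℕ → ℝ) (h0 : σ 0 = 0) (hm : StrictMono σ)
    (ht : Tendsto σ atTop atTop)
    (hp : ∀ k, ∃ v : ℝ → E, ContinuousOn v (Icc (σ k) (σ (k + 1))) ∧
      ∀ t ∈ Ico (σ k) (σ (k + 1)), g t = v t)
    {a b : ℝ} (ha : 0 ≤ a) (hab : a ≤ b) :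
    IntervalIntegrable g volume a b := by
  obtain ⟨K, hK⟩ := (ht.eventually (eventually_ge_atTop b)).exists
  have key : ∀ n, IntervalIntegrable g volume 0 (σ n) := by
    intro n
    induction n with
    | zero => rw [h0]
    | succ n ih =>
      refine ih.trans ?_
      obtain ⟨v, hv, heq⟩ := hp n
      have hle : σ n ≤ σ (n + 1) := (hm (Nat.lt_succ_self n)).le
      rw [intervalIntegrable_iff_integrableOn_Ioc_of_le hle]
      have hvi : IntegrableOn v (Ioc (σ n) (σ (n + 1))) volume :=
        (hv.integrableOn_Icc).mono_set Ioc_subset_Icc_self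
      have h1 : ∀ᵐ (τ : ℝ) ∂volume, τ ≠ σ (n + 1) := by
        rw [ae_iff]
        simp only [not_not, Set.setOf_eq_eq_singleton]
        exact Real.volume_singleton
      have hae : ∀ᵐ τ ∂(volume.restrict (Ioc (σ n) (σ (n + 1)))), v τ = g τ := by
        rw [ae_restrict_iff' measurableSet_Ioc]
        filter_upwards [h1] with τ hτ hτ2
        exact (heq τ ⟨hτ2.1.le, lt_of_le_of_ne hτ2.2 hτ⟩).symm
      exact hvi.congr hae
  have hσK0 : (0:ℝ) ≤ σ K := h0 ▸ (hm.monotone (Nat.zero_le K))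
  refine (key K).mono_set ?_
  rw [Set.uIcc_of_le hab, Set.uIcc_of_le hσK0]
  exact Icc_subset_Icc ha hK

omit [CompleteSpace X] [NormedAddCommGroup Uv] [NormedSpace ℝ Uv] in
lemma aux_sg_cont (Tg : C0Semigroup X) (M w : ℝ)
    (hT : ∀ t ≥ (0:ℝ), ‖Tg.T t‖ ≤ M * Real.exp (w * t))
    (s : ℝ) {c : ℝ → X} {A : Set ℝ} (hA : A ⊆ Iic s)
    (hc : ContinuousOn c A) :
    ContinuousOn (fun τ => Tg.T (s - τ) (c τ)) A := by
  intro τ₀ hτ₀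
  have hs0 : (0:ℝ) ≤ s - τ₀ := sub_nonneg.2 (hA hτ₀)
  have hmap : MapsTo (fun τ : ℝ => s - τ) A (Ici 0) := fun τ hτ => show (0:ℝ) ≤ s - τ from sub_nonneg.2 (hA hτ)
  have h1 : ContinuousWithinAt (fun τ => Tg.T (s - τ) (c τ₀)) A τ₀ :=
    (Tg.strong_cont (c τ₀) (s - τ₀) hs0).comp
      ((continuous_const.sub continuous_id).continuousWithinAt) hmap
  have h2 : Tendsto (fun τ => Tg.T (s - τ) (c τ - c τ₀)) (nhdsWithin τ₀ A) (nhds 0) := by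
    have hbd : ∀ᶠ τ in nhdsWithin τ₀ A,
        ‖Tg.T (s - τ) (c τ - c τ₀)‖ ≤ M * Real.exp (w * (s - τ)) * ‖c τ - c τ₀‖ := by
      filter_upwards [self_mem_nhdsWithin] with τ hτ
      calc ‖Tg.T (s - τ) (c τ - c τ₀)‖ ≤ ‖Tg.T (s - τ)‖ * ‖c τ - c τ₀‖ :=
            (Tg.T (s - τ)).le_opNorm _
        _ ≤ M * Real.exp (w * (s - τ)) * ‖c τ - c τ₀‖ :=
            mul_le_mul_of_nonneg_right (hT _ (sub_nonneg.2 (hA hτ))) (norm_nonneg _)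
    have hc0 : Tendsto (fun τ => ‖c τ - c τ₀‖) (nhdsWithin τ₀ A) (nhds 0) := by
      have h3 := ((hc τ₀ hτ₀).sub (continuousWithinAt_const (b := c τ₀))).norm
      rw [ContinuousWithinAt] at h3
      simpa using h3
    have hexp : Tendsto (fun τ => M * Real.exp (w * (s - τ))) (nhdsWithin τ₀ A)
        (nhds (M * Real.exp (w * (s - τ₀)))) :=
      ((continuous_const.mul ((Real.continuous_exp).comp
        (continuous_const.mul (continuous_const.sub continuous_id)))).continuousAt).continuousWithinAt
    have h4 := hexp.mul hc0
    rw [mul_zero] at h4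
    exact squeeze_zero_norm' hbd h4
  have hsum := h2.add h1
  rw [zero_add] at hsum
  have heq : (fun τ => Tg.T (s - τ) (c τ - c τ₀) + Tg.T (s - τ) (c τ₀))
      = fun τ => Tg.T (s - τ) (c τ) := by
    funext τ; rw [map_sub]; abel
  rw [heq] at hsum
  exact hsum

omit [NormedSpace ℝ Uv] [CompleteSpace X] in
lemma aux_gamma_integrable (γ : ℝ → ℝ) (hγ : ContinuousOn γ (Ici 0))
    {u : ℝ → Uv} (hu : PWCont u) {a b : ℝ} (ha : 0 ≤ a) (hab : a ≤ b) :
    IntervalIntegrable (fun τ => γ ‖u τ‖) volume a b := by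
  obtain ⟨σ, h0, hm, ht, hp⟩ := hu
  refine aux_pw_integrable _ σ h0 hm ht (fun k => ?_) ha hab
  obtain ⟨v, hv, hvu⟩ := hp k
  refine ⟨fun τ => γ ‖v τ‖, hγ.comp hv.norm (fun τ _ => norm_nonneg _), fun t htm => ?_⟩
  rw [hvu t htm]

lemma aux_integrand_integrable
    (Tg : C0Semigroup X) (f : ℝ → X → Uv → X) (M w : ℝ) (hM : 0 ≤ M) (hw : 0 ≤ w)
    (hT : ∀ t ≥ (0:ℝ), ‖Tg.T t‖ ≤ M * Real.exp (w * t))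
    (hSL1 : CondSL1 f)
    (γ Nf : ℝ → ℝ) (hSL3 : CondSL3With f γ Nf)
    {u : ℝ → Uv} (hu : PWCont u)
    {t0 tf s : ℝ} (ht0 : 0 ≤ t0) (hs : s ∈ Icc t0 tf)
    {y : ℝ → X} (hy : ContinuousOn y (Icc t0 tf)) {r : ℝ}
    (hyr : ∀ τ ∈ Icc t0 tf, ‖y τ‖ ≤ r) :
    IntervalIntegrable (fun τ => Tg.T (s - τ) (f τ (y τ) (u τ))) volume t0 s := by
  obtain ⟨σ₁, h10, h1m, h1t, hp1⟩ := hSL1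
  obtain ⟨σ₂, h20, h2m, h2t, hp2⟩ := hu
  have httf : t0 ≤ tf := hs.1.trans hs.2
  set P : ℝ → ℝ := fun τ => max t0 (min τ tf) with hP
  have hPc : Continuous P := continuous_const.max (continuous_id.min continuous_const)
  have hPmem : ∀ τ, P τ ∈ Icc t0 tf :=
    fun τ => ⟨le_max_left _ _, max_le httf (min_le_right _ _)⟩
  have hPeq : ∀ τ ∈ Icc t0 tf, P τ = τ := by
    intro τ hτ
    simp only [hP]
    rw [min_eq_left hτ.2, max_eq_right hτ.1]
  set yc : ℝ → X := fun τ => y (P τ) with hyc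
  have hycc : Continuous yc := hy.comp_continuous hPc hPmem
  set D : Set ℝ := range σ₁ ∪ range σ₂ with hD
  have hDc : D.Countable := (countable_range σ₁).union (countable_range σ₂)
  set S : Set ℝ := Icc t0 s \ D with hS
  have hSm : MeasurableSet S := measurableSet_Icc.diff hDc.measurableSet
  have hcS : ContinuousOn (fun τ => f τ (yc τ) (u τ)) S := by
    intro τ₀ hτ₀
    have hτ00 : (0:ℝ) ≤ τ₀ := le_trans ht0 hτ₀.1.1
    obtain ⟨k, hk⟩ := aux_exists_piece σ₁ h10 h1t hτ00
    obtain ⟨j, hj⟩ := aux_exists_piece σ₂ h20 h2t hτ00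
    obtain ⟨g, hg, hgf⟩ := hp1 k
    obtain ⟨v, hv, hvu⟩ := hp2 j
    have hnr1 : τ₀ ∉ range σ₁ := fun h => hτ₀.2 (Or.inl h)
    have hnr2 : τ₀ ∉ range σ₂ := fun h => hτ₀.2 (Or.inr h)
    have hk1 : τ₀ ∈ Ioo (σ₁ k) (σ₁ (k + 1)) :=
      ⟨lt_of_le_of_ne hk.1 (fun h => hnr1 ⟨k, h⟩), hk.2⟩
    have hj1 : τ₀ ∈ Ioo (σ₂ j) (σ₂ (j + 1)) :=
      ⟨lt_of_le_of_ne hj.1 (fun h => hnr2 ⟨j, h⟩), hj.2⟩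
    set O : Set ℝ := Ioo (σ₁ k) (σ₁ (k + 1)) ∩ Ioo (σ₂ j) (σ₂ (j + 1)) with hO
    have hOo : IsOpen O := isOpen_Ioo.inter isOpen_Ioo
    have hτO : τ₀ ∈ O := ⟨hk1, hj1⟩
    have heqO : ∀ τ ∈ O, f τ (yc τ) (u τ) = g τ (yc τ) (v τ) := by
      intro τ hτ
      rw [hvu τ (Ioo_subset_Ico_self hτ.2), hgf τ (Ioo_subset_Ico_self hτ.1)]
    have hin : ContinuousOn (fun τ : ℝ => ((τ, yc τ, v τ) : ℝ × X × Uv)) O :=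
      ContinuousOn.prodMk (continuousOn_id : ContinuousOn (fun τ : ℝ => τ) O)
        (ContinuousOn.prodMk (hycc.continuousOn : ContinuousOn yc O)
        (hv.mono ((inter_subset_right).trans Ioo_subset_Icc_self)))
    have hmapsO : MapsTo (fun τ : ℝ => ((τ, yc τ, v τ) : ℝ × X × Uv)) O
        {p : ℝ × X × Uv | p.1 ∈ Icc (σ₁ k) (σ₁ (k + 1))} :=
      fun τ hτ => Ioo_subset_Icc_self hτ.1
    have hcont : ContinuousOn (fun τ => g τ (yc τ) (v τ)) O := hg.comp hin hmapsO
    have hca : ContinuousAt (fun τ => g τ (yc τ) (v τ)) τ₀ :=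
      hcont.continuousAt (hOo.mem_nhds hτO)
    have hEv : (fun τ => f τ (yc τ) (u τ)) =ᶠ[nhds τ₀] (fun τ => g τ (yc τ) (v τ)) :=
      eventually_of_mem (hOo.mem_nhds hτO) heqO
    have hca2 : ContinuousAt (fun τ => f τ (yc τ) (u τ)) τ₀ := hca.congr hEv.symm
    exact hca2.continuousWithinAt
  have hφS : ContinuousOn (fun τ => Tg.T (s - τ) (f τ (yc τ) (u τ))) S :=
    aux_sg_cont Tg M w hT s (fun τ hτ => hτ.1.2) hcS
  have haeS : AEStronglyMeasurable (fun τ => Tg.T (s - τ) (f τ (yc τ) (u τ)))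
      (volume.restrict S) := hφS.aestronglyMeasurable hSm
  have hcongrset : S =ᵐ[volume] (Icc t0 s : Set ℝ) := by
    rw [MeasureTheory.ae_eq_set]
    constructor
    · simp [hS]
    · refine measure_mono_null (fun τ hτ => ?_) (hDc.measure_zero volume)
      rcases not_and_or.1 hτ.2 with h | h
      · exact absurd hτ.1 h
      · exact not_not.1 h
  have hae : AEStronglyMeasurable (fun τ => Tg.T (s - τ) (f τ (yc τ) (u τ)))
      (volume.restrict (Icc t0 s)) := by
    rwa [Measure.restrict_congr_set hcongrset] at haeS
  obtain ⟨⟨⟨hγc, hγm, hγ0⟩, _⟩, hNm, hNpos, hfb⟩ := hSL3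
  have hγnn : ∀ a : ℝ, 0 ≤ a → 0 ≤ γ a := by
    intro a haa
    rcases eq_or_lt_of_le haa with h | h
    · rw [← h, hγ0]
    · have h5 := hγm (self_mem_Ici) (mem_Ici.2 haa) h
      rw [hγ0] at h5
      exact h5.le
  set C : ℝ := M * Real.exp (w * (s - t0)) * Nf (max r 0) with hC
  have hdom : IntegrableOn (fun τ => C * (1 + γ ‖u τ‖)) (Icc t0 s) volume := by
    have h1 : IntervalIntegrable (fun τ => γ ‖u τ‖) volume t0 s :=
      aux_gamma_integrable γ hγc ⟨σ₂, h20, h2m, h2t, hp2⟩ ht0 hs.1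
    have h2 : IntervalIntegrable (fun τ => C * (1 + γ ‖u τ‖)) volume t0 s := by
      have h3 := (intervalIntegrable_const (μ := volume) (a := t0) (b := s) (c := (1:ℝ))).add h1
      exact h3.const_mul C
    rw [intervalIntegrable_iff_integrableOn_Ioc_of_le hs.1] at h2
    rwa [integrableOn_Icc_iff_integrableOn_Ioc]
  have hbnd : ∀ᵐ τ ∂(volume.restrict (Icc t0 s)),
      ‖Tg.T (s - τ) (f τ (yc τ) (u τ))‖ ≤ C * (1 + γ ‖u τ‖) := by
    rw [ae_restrict_iff' measurableSet_Icc]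
    refine Filter.Eventually.of_forall (fun τ hτ => ?_)
    have hτ0 : (0:ℝ) ≤ τ := ht0.trans hτ.1
    have hsτ : (0:ℝ) ≤ s - τ := sub_nonneg.2 hτ.2
    have hyr' : ‖yc τ‖ ≤ max r 0 :=
      le_max_of_le_left (hyr (P τ) (hPmem τ))
    have hN : Nf ‖yc τ‖ ≤ Nf (max r 0) :=
      hNm (norm_nonneg _) (le_max_right r 0) hyr'
    have hγu : (0:ℝ) ≤ γ ‖u τ‖ := hγnn _ (norm_nonneg _)
    calc ‖Tg.T (s - τ) (f τ (yc τ) (u τ))‖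
        ≤ ‖Tg.T (s - τ)‖ * ‖f τ (yc τ) (u τ)‖ := (Tg.T _).le_opNorm _
      _ ≤ (M * Real.exp (w * (s - τ))) * (Nf ‖yc τ‖ * (1 + γ ‖u τ‖)) := by
          apply mul_le_mul (hT _ hsτ) (hfb τ hτ0 _ _) (norm_nonneg _)
          positivity
      _ ≤ (M * Real.exp (w * (s - t0))) * (Nf (max r 0) * (1 + γ ‖u τ‖)) := by
          apply mul_le_mul
          · apply mul_le_mul_of_nonneg_left _ hM
            apply Real.exp_le_exp.2
            apply mul_le_mul_of_nonneg_left (by linarith [hτ.1] : s - τ ≤ s - t0) hw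
          · exact mul_le_mul_of_nonneg_right hN (by linarith)
          · apply mul_nonneg (le_of_lt (hNpos _ (norm_nonneg _))) (by linarith)
          · positivity
      _ = C * (1 + γ ‖u τ‖) := by rw [hC]; ring
  have hint : IntegrableOn (fun τ => Tg.T (s - τ) (f τ (yc τ) (u τ))) (Icc t0 s) volume :=
    Integrable.mono' hdom hae hbnd
  have hinteq : IntegrableOn (fun τ => Tg.T (s - τ) (f τ (y τ) (u τ))) (Icc t0 s) volume := by
    refine hint.congr_fun (fun τ hτ => ?_) measurableSet_Icc
    rw [hyc]
    simp only []
    rw [hPeq τ ⟨hτ.1, hτ.2.trans hs.2⟩]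
  rw [intervalIntegrable_iff_integrableOn_Ioc_of_le hs.1]
  exact hinteq.mono_set Ioc_subset_Icc_self

end AuxLemmas

/-- Lemma F.1: under (SL1)–(SL4) (with `γ` from (SL3)) and the semigroup bound
`‖T(t)‖ ≤ M e^{wt}`, the deviation between the mild solution with input `u` and the
zero-input mild solution with the same initial data admits an explicit Gronwall-type bound,
as long as both solutions remain in a ball of radius `r`. -/
theorem mild_solution_deviation_bound (Tg : C0Semigroup X) (f : ℝ → X → Uv → X)
    (M w : ℝ) (hM : 1 ≤ M) (hw : 0 ≤ w)
    (hT : ∀ t ≥ (0:ℝ), ‖Tg.T t‖ ≤ M * Real.exp (w * t))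
    (hSL1 : CondSL1 f) (hSL2 : CondSL2 f)
    (γ N : ℝ → ℝ) (hSL3 : CondSL3With f γ N) (hSL4 : CondSL4 f) :
    ∀ r > (0:ℝ), ∀ η > (0:ℝ), ∃ L k : ℝ, 0 ≤ L ∧ 0 < k ∧ CondSL2With f r L ∧
      ∀ t0 ≥ (0:ℝ), ∀ tstar > t0, ∀ u : ℝ → Uv, PWCont u →
        ∀ x z : ℝ → X,
          IsMild Tg f u t0 tstar x →
          IsMild Tg f (fun _ => 0) t0 tstar z →
          x t0 = z t0 →
          (∀ t ∈ Icc t0 tstar, ‖x t‖ ≤ r ∧ ‖z t‖ ≤ r) →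
          ∀ t ∈ Icc t0 tstar,
            ‖x t - z t‖ ≤
              (η * (t - t0) + k * ∫ s in t0..t, γ ‖u s‖) *
                (M * Real.exp (w * (t - t0))) *
                Real.exp (L * M * Real.exp (w * (t - t0)) * (t - t0)) := by
  intro r hr η hη
  obtain ⟨L, hL0, hL⟩ := hSL2 r hr
  obtain ⟨δ₀, hδ₀, hδ4⟩ := hSL4 r hr η hη
  have hγc : ContinuousOn γ (Ici 0) := hSL3.1.1.1
  have hγm : StrictMonoOn γ (Ici 0) := hSL3.1.1.2.1
  have hγ0 : γ 0 = 0 := hSL3.1.1.2.2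
  have hNm : MonotoneOn N (Ici 0) := hSL3.2.1
  have hNpos : ∀ ρ ≥ (0:ℝ), 0 < N ρ := hSL3.2.2.1
  have hfb := hSL3.2.2.2
  have hγnn : ∀ a : ℝ, 0 ≤ a → 0 ≤ γ a := by
    intro a haa
    rcases eq_or_lt_of_le haa with h | h
    · rw [← h, hγ0]
    · have h5 := hγm (self_mem_Ici) (mem_Ici.2 haa) h
      rw [hγ0] at h5
      exact h5.le
  set δ : ℝ := min δ₀ r with hδdef
  have hδpos : 0 < δ := lt_min hδ₀ hr
  have hγδ : 0 < γ δ := by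
    have h5 := hγm (self_mem_Ici) (mem_Ici.2 hδpos.le) hδpos
    rwa [hγ0] at h5
  have hNr : 0 < N r := hNpos r hr.le
  set k : ℝ := 2 * N r / γ δ + 2 * N r with hkdef
  have hkpos : 0 < k := by positivity
  refine ⟨L, k, hL0, hkpos, hL, ?_⟩
  intro t0 ht0 tstar htstar u hu x z hx hz hxz hbound t ht
  have httstar : t0 ≤ tstar := htstar.le
  -- pointwise bound on the difference of nonlinearities
  have hpt : ∀ τ ∈ Icc t0 tstar,
      ‖f τ (x τ) (u τ) - f τ (z τ) 0‖ ≤ L * ‖x τ - z τ‖ + η + k * γ ‖u τ‖ := by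
    intro τ hτ
    have hτ0 : (0:ℝ) ≤ τ := ht0.trans hτ.1
    obtain ⟨hxr, hzr⟩ := hbound τ hτ
    have hγu : (0:ℝ) ≤ γ ‖u τ‖ := hγnn _ (norm_nonneg _)
    by_cases hcase : ‖u τ‖ ≤ δ
    · have a1 : ‖f τ (x τ) (u τ) - f τ (z τ) (u τ)‖ ≤ L * ‖x τ - z τ‖ :=
        hL τ hτ0 _ _ _ hxr hzr (hcase.trans (min_le_right _ _))
      have a2 : ‖f τ (z τ) (u τ) - f τ (z τ) 0‖ < η :=
        hδ4 τ hτ0 _ _ hzr (hcase.trans (min_le_left _ _))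
      have tri : ‖f τ (x τ) (u τ) - f τ (z τ) 0‖ ≤
          ‖f τ (x τ) (u τ) - f τ (z τ) (u τ)‖ + ‖f τ (z τ) (u τ) - f τ (z τ) 0‖ := by
        have h6 := norm_add_le (f τ (x τ) (u τ) - f τ (z τ) (u τ))
          (f τ (z τ) (u τ) - f τ (z τ) 0)
        rwa [sub_add_sub_cancel] at h6
      nlinarith [mul_nonneg hkpos.le hγu]
    · push_neg at hcase
      have hγlt : γ δ ≤ γ ‖u τ‖ :=
        (hγm (mem_Ici.2 hδpos.le) (mem_Ici.2 (norm_nonneg _)) hcase).le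
      have b1 : ‖f τ (x τ) (u τ)‖ ≤ N r * (1 + γ ‖u τ‖) := by
        calc ‖f τ (x τ) (u τ)‖ ≤ N ‖x τ‖ * (1 + γ ‖u τ‖) := hfb τ hτ0 _ _
          _ ≤ N r * (1 + γ ‖u τ‖) :=
            mul_le_mul_of_nonneg_right
              (hNm (mem_Ici.2 (norm_nonneg _)) (mem_Ici.2 hr.le) hxr) (by linarith)
      have b2 : ‖f τ (z τ) 0‖ ≤ N r := by
        have h7 := hfb τ hτ0 (z τ) 0
        rw [norm_zero, hγ0] at h7
        have h8 : N ‖z τ‖ ≤ N r := hNm (mem_Ici.2 (norm_nonneg _)) (mem_Ici.2 hr.le) hzr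
        nlinarith [hNpos ‖z τ‖ (norm_nonneg _)]
      have tri : ‖f τ (x τ) (u τ) - f τ (z τ) 0‖ ≤ N r * (1 + γ ‖u τ‖) + N r :=
        (norm_sub_le _ _).trans (by linarith)
      have e1 : 2 * N r ≤ 2 * N r / γ δ * γ ‖u τ‖ := by
        rw [div_mul_eq_mul_div, le_div_iff₀ hγδ]
        nlinarith
      have e2 : N r * γ ‖u τ‖ ≤ 2 * N r * γ ‖u τ‖ := by nlinarith
      have hLn : (0:ℝ) ≤ L * ‖x τ - z τ‖ := mul_nonneg hL0 (norm_nonneg _)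
      have hksplit : k * γ ‖u τ‖ = 2 * N r / γ δ * γ ‖u τ‖ + 2 * N r * γ ‖u τ‖ := by
        rw [hkdef]; ring
      have final : ‖f τ (x τ) (u τ) - f τ (z τ) 0‖ ≤ k * γ ‖u τ‖ := by
        calc ‖f τ (x τ) (u τ) - f τ (z τ) 0‖ ≤ N r * (1 + γ ‖u τ‖) + N r := tri
          _ = 2 * N r + N r * γ ‖u τ‖ := by ring
          _ ≤ 2 * N r / γ δ * γ ‖u τ‖ + 2 * N r * γ ‖u τ‖ := by linarith
          _ = k * γ ‖u τ‖ := hksplit.symm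
      linarith
  -- integrability facts
  have hPW0 : PWCont (fun _ : ℝ => (0 : Uv)) :=
    ⟨fun n => (n : ℝ), by simp, Nat.strictMono_cast, tendsto_natCast_atTop_atTop,
      fun j => ⟨fun _ => 0, continuousOn_const, fun _ _ => rfl⟩⟩
  have hIu : ∀ s ∈ Icc t0 tstar,
      IntervalIntegrable (fun τ => Tg.T (s - τ) (f τ (x τ) (u τ))) volume t0 s :=
    fun s hs => aux_integrand_integrable Tg f M w (by linarith) hw hT hSL1 γ N hSL3 hu
      ht0 hs hx.1 (fun τ hτ => (hbound τ hτ).1)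
  have hIz : ∀ s ∈ Icc t0 tstar,
      IntervalIntegrable (fun τ => Tg.T (s - τ) (f τ (z τ) 0)) volume t0 s :=
    fun s hs => aux_integrand_integrable Tg f M w (by linarith) hw hT hSL1 γ N hSL3 hPW0
      ht0 hs hz.1 (fun τ hτ => (hbound τ hτ).2)
  have hIγ : ∀ a b : ℝ, t0 ≤ a → a ≤ b → IntervalIntegrable (fun τ => γ ‖u τ‖) volume a b :=
    fun a b h1 h2 => aux_gamma_integrable γ hγc hu (ht0.trans h1) h2
  -- the deviation formula
  have hdiff : ∀ s ∈ Icc t0 t,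
      x s - z s = ∫ τ in t0..s, Tg.T (s - τ) (f τ (x τ) (u τ) - f τ (z τ) 0) := by
    intro s hs
    have hs' : s ∈ Icc t0 tstar := ⟨hs.1, hs.2.trans ht.2⟩
    rw [hx.2 s hs', hz.2 s hs', hxz, add_sub_add_left_eq_sub,
      ← intervalIntegral.integral_sub (hIu s hs') (hIz s hs')]
    apply intervalIntegral.integral_congr
    intro τ _
    simp only [map_sub]
  set K : ℝ := M * Real.exp (w * (t - t0)) with hKdef
  have hKpos : 0 < K := mul_pos (by linarith) (Real.exp_pos _)
  have hKb : ∀ s τ : ℝ, t0 ≤ τ → τ ≤ s → s ≤ t → ‖Tg.T (s - τ)‖ ≤ K := by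
    intro s τ h1 h2 h3
    refine (hT _ (by linarith)).trans ?_
    rw [hKdef]
    apply mul_le_mul_of_nonneg_left _ (by linarith : (0:ℝ) ≤ M)
    exact Real.exp_le_exp.2 (mul_le_mul_of_nonneg_left (by linarith) hw)
  -- the integral inequality
  have hnorm : ∀ s ∈ Icc t0 t, ‖x s - z s‖ ≤
      K * L * (∫ τ in Ioc t0 s, ‖x τ - z τ‖) +
      (K * η * (s - t0) + K * k * ∫ τ in Ioc t0 s, γ ‖u τ‖) := by
    intro s hs
    have hs' : s ∈ Icc t0 tstar := ⟨hs.1, hs.2.trans ht.2⟩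
    rw [hdiff s hs, intervalIntegral.integral_of_le hs.1]
    have hint1 : IntegrableOn (fun τ => ‖x τ - z τ‖) (Ioc t0 s) volume :=
      (((hx.1.sub hz.1).norm.mono (Icc_subset_Icc_right hs'.2)).integrableOn_Icc).mono_set
        Ioc_subset_Icc_self
    have hint2 : IntegrableOn (fun τ => γ ‖u τ‖) (Ioc t0 s) volume := by
      have h9 := hIγ t0 s le_rfl hs.1
      rwa [intervalIntegrable_iff_integrableOn_Ioc_of_le hs.1] at h9
    have hintc : IntegrableOn (fun _ : ℝ => K * η) (Ioc t0 s) volume :=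
      integrableOn_const measure_Ioc_lt_top.ne
    have hint2' : IntegrableOn (fun τ => K * k * γ ‖u τ‖) (Ioc t0 s) volume :=
      hint2.const_mul (K * k)
    have hint1' : IntegrableOn (fun τ => K * L * ‖x τ - z τ‖) (Ioc t0 s) volume :=
      hint1.const_mul (K * L)
    have hsum2 : IntegrableOn (fun τ => K * η + K * k * γ ‖u τ‖) (Ioc t0 s) volume :=
      hintc.add hint2'
    have hinth : IntegrableOn
        (fun τ => K * L * ‖x τ - z τ‖ + (K * η + K * k * γ ‖u τ‖)) (Ioc t0 s) volume :=
      hint1'.add hsum2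
    calc ‖∫ τ in Ioc t0 s, Tg.T (s - τ) (f τ (x τ) (u τ) - f τ (z τ) 0)‖
        ≤ ∫ τ in Ioc t0 s, ‖Tg.T (s - τ) (f τ (x τ) (u τ) - f τ (z τ) 0)‖ :=
          norm_integral_le_integral_norm _
      _ ≤ ∫ τ in Ioc t0 s, (K * L * ‖x τ - z τ‖ + (K * η + K * k * γ ‖u τ‖)) := by
          refine integral_mono_of_nonneg
            (Filter.Eventually.of_forall (fun τ => norm_nonneg _)) hinth ?_
          rw [Filter.EventuallyLE, ae_restrict_iff' measurableSet_Ioc]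
          refine Filter.Eventually.of_forall (fun τ hτ => ?_)
          have hτ' : τ ∈ Icc t0 tstar := ⟨hτ.1.le, hτ.2.trans hs'.2⟩
          calc ‖Tg.T (s - τ) (f τ (x τ) (u τ) - f τ (z τ) 0)‖
              ≤ ‖Tg.T (s - τ)‖ * ‖f τ (x τ) (u τ) - f τ (z τ) 0‖ := (Tg.T _).le_opNorm _
            _ ≤ K * (L * ‖x τ - z τ‖ + η + k * γ ‖u τ‖) :=
                mul_le_mul (hKb s τ hτ.1.le hτ.2 hs.2) (hpt τ hτ') (norm_nonneg _) hKpos.le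
            _ = K * L * ‖x τ - z τ‖ + (K * η + K * k * γ ‖u τ‖) := by ring
      _ = K * L * (∫ τ in Ioc t0 s, ‖x τ - z τ‖) +
          (K * η * (s - t0) + K * k * ∫ τ in Ioc t0 s, γ ‖u τ‖) := by
          have i1 : ∫ τ in Ioc t0 s, K * L * ‖x τ - z τ‖
              = K * L * ∫ τ in Ioc t0 s, ‖x τ - z τ‖ :=
            integral_const_mul (K * L) (fun τ => ‖x τ - z τ‖)
          have i2 : ∫ τ in Ioc t0 s, K * k * γ ‖u τ‖
              = K * k * ∫ τ in Ioc t0 s, γ ‖u τ‖ :=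
            integral_const_mul (K * k) (fun τ => γ ‖u τ‖)
          have i3 : ∫ _ in Ioc t0 s, (K * η : ℝ) = K * η * (s - t0) := by
            rw [setIntegral_const, measureReal_def, Real.volume_Ioc,
              ENNReal.toReal_ofReal (by linarith [hs.1] : (0:ℝ) ≤ s - t0), smul_eq_mul]
            ring
          rw [integral_add hint1' hsum2, integral_add hintc hint2', i1, i2, i3]
  -- replace the inhomogeneity by its value at the endpoint
  have hγint_nonneg : ∀ a b : ℝ, t0 ≤ a → a ≤ b → 0 ≤ ∫ τ in a..b, γ ‖u τ‖ :=
    fun a b h1 h2 => intervalIntegral.integral_nonneg h2 (fun τ _ => hγnn _ (norm_nonneg _))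
  set B : ℝ := K * η * (t - t0) + K * k * ∫ τ in t0..t, γ ‖u τ‖ with hBdef
  have hnorm' : ∀ s ∈ Icc t0 t,
      ‖x s - z s‖ ≤ K * L * (∫ τ in t0..s, ‖x τ - z τ‖) + B := by
    intro s hs
    have h1 := hnorm s hs
    rw [← intervalIntegral.integral_of_le hs.1] at h1
    have h2 : ∫ τ in t0..s, γ ‖u τ‖ ≤ ∫ τ in t0..t, γ ‖u τ‖ := by
      have ha1 := hIγ t0 s le_rfl hs.1
      have ha2 := hIγ s t hs.1 hs.2
      have ha3 := intervalIntegral.integral_add_adjacent_intervals ha1 ha2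
      have ha4 := hγint_nonneg s t hs.1 hs.2
      linarith
    rw [← intervalIntegral.integral_of_le hs.1] at h1
    have h3 : K * η * (s - t0) ≤ K * η * (t - t0) :=
      mul_le_mul_of_nonneg_left (sub_le_sub_right hs.2 t0)
        (mul_nonneg hKpos.le hη.le)
    have h4 : K * k * ∫ τ in t0..s, γ ‖u τ‖ ≤ K * k * ∫ τ in t0..t, γ ‖u τ‖ :=
      mul_le_mul_of_nonneg_left h2 (mul_nonneg hKpos.le hkpos.le)
    rw [hBdef]
    linarith
  -- Grönwall
  set P : ℝ → ℝ := fun τ => max t0 (min τ tstar) with hPdef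
  have hPc : Continuous P := continuous_const.max (continuous_id.min continuous_const)
  have hPmem : ∀ τ, P τ ∈ Icc t0 tstar :=
    fun τ => ⟨le_max_left _ _, max_le httstar (min_le_right _ _)⟩
  have hPeq : ∀ τ ∈ Icc t0 tstar, P τ = τ := by
    intro τ hτ
    simp only [hPdef]
    rw [min_eq_left hτ.2, max_eq_right hτ.1]
  set gq : ℝ → ℝ := fun τ => ‖x (P τ) - z (P τ)‖ with hgqdef
  have hgqc : Continuous gq :=
    ((hx.1.comp_continuous hPc hPmem).sub (hz.1.comp_continuous hPc hPmem)).norm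
  set G : ℝ → ℝ := fun s => ∫ τ in t0..s, gq τ with hGdef
  have hGd : ∀ s, HasDerivAt G (gq s) s :=
    fun s => (hgqc.integral_hasStrictDerivAt t0 s).hasDerivAt
  have hGc : ContinuousOn G (Icc t0 t) :=
    (continuous_iff_continuousAt.2 fun s => (hGd s).continuousAt).continuousOn
  have hgq_eq : ∀ τ ∈ Icc t0 tstar, gq τ = ‖x τ - z τ‖ := by
    intro τ hτ
    rw [hgqdef]
    simp only []
    rw [hPeq τ hτ]
  have hGnn : ∀ s ∈ Icc t0 t, 0 ≤ G s :=
    fun s hs => intervalIntegral.integral_nonneg hs.1 (fun τ _ => norm_nonneg _)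
  have hGeq : ∀ s ∈ Icc t0 t, G s = ∫ τ in t0..s, ‖x τ - z τ‖ := by
    intro s hs
    apply intervalIntegral.integral_congr
    intro τ hτ
    rw [Set.uIcc_of_le hs.1] at hτ
    exact hgq_eq τ ⟨hτ.1, hτ.2.trans (hs.2.trans ht.2)⟩
  have hbnd : ∀ s ∈ Ico t0 t, ‖gq s‖ ≤ K * L * ‖G s‖ + B := by
    intro s hs
    have hs' : s ∈ Icc t0 t := ⟨hs.1, hs.2.le⟩
    rw [hgq_eq s ⟨hs.1, hs.2.le.trans ht.2⟩, Real.norm_of_nonneg (norm_nonneg _),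
      Real.norm_of_nonneg (hGnn s hs'), hGeq s hs']
    exact hnorm' s hs'
  have hGt0 : ‖G t0‖ ≤ 0 := by
    simp [hGdef, intervalIntegral.integral_same]
  have key := norm_le_gronwallBound_of_norm_deriv_right_le hGc
    (fun s _ => (hGd s).hasDerivWithinAt) hGt0 hbnd t (right_mem_Icc.2 ht.1)
  rw [Real.norm_of_nonneg (hGnn t (right_mem_Icc.2 ht.1))] at key
  have hfinal1 : ‖x t - z t‖ ≤ K * L * G t + B := by
    have h1 := hnorm' t (right_mem_Icc.2 ht.1)
    rwa [← hGeq t (right_mem_Icc.2 ht.1)] at h1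
  have hfinal2 : ‖x t - z t‖ ≤ K * L * gronwallBound 0 (K * L) B (t - t0) + B := by
    refine hfinal1.trans ?_
    have h1 := mul_le_mul_of_nonneg_left key (mul_nonneg hKpos.le hL0)
    linarith
  have hgb : K * L * gronwallBound 0 (K * L) B (t - t0) + B
      = B * Real.exp (K * L * (t - t0)) := by
    by_cases hKL : K * L = 0
    · rw [hKL]
      simp [gronwallBound]
    · rw [gronwallBound_of_K_ne_0 hKL]
      beta_reduce
      rw [zero_mul, zero_add, div_mul_eq_mul_div, mul_div_assoc', mul_div_cancel_left₀ _ hKL]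
      ring
  refine hfinal2.trans (le_of_eq ?_)
  rw [hgb]
  have harg : K * L * (t - t0) = L * M * Real.exp (w * (t - t0)) * (t - t0) := by
    rw [hKdef]; ring
  rw [harg, hBdef, hKdef]
  ring
end

section
/- Consider the semilinear evolution equation ẋ(t)=Ax(t)+f(t,x(t),u(t)) on a Banach space X, where A generates an exponentially stable C0-semigroup T(·), i.e. ‖T(t)‖ ≤ Me^{−λt} for some M≥1 and λ>0, and f satisfies the generalized bilinear bound ‖f(t,ξ,μ)‖ ≤ (K‖ξ‖+d)γ(‖μ‖) for all t≥0, ξ∈X, μ∈Uv, where K,d≥0 and γ∈K∞. Then every mild solution x:[t0,t_max)→X with initial datum x(t0)=x0 and piecewise continuous input u satisfies, for all τ∈[t0,t_max), the a priori bound ‖x(τ)‖ ≤ M[‖x0‖ + d∫_{t0}^{τ} γ(‖u(s)‖)ds] · exp(MK∫_{t0}^{τ} γ(‖u(s)‖)ds). -/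
open Set Filter MeasureTheory

variable {X Uv : Type*} [NormedAddCommGroup X] [NormedSpace ℝ X] [CompleteSpace X]
  [NormedAddCommGroup Uv] [NormedSpace ℝ Uv]

section GronwallAux

lemma exists_piece' (σ : ℕ → ℝ) (h0 : σ 0 = 0) (hten : Tendsto σ atTop atTop) {x : ℝ}
    (hx : 0 ≤ x) : ∃ k, σ k ≤ x ∧ x < σ (k+1) := by
  have hex : ∃ n, x < σ n := (hten.eventually (eventually_gt_atTop x)).exists
  classical
  have hn : x < σ (Nat.find hex) := Nat.find_spec hex
  have hn0 : Nat.find hex ≠ 0 := by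
    intro h
    rw [h, h0] at hn; linarith
  obtain ⟨k, hk⟩ := Nat.exists_eq_succ_of_ne_zero hn0
  refine ⟨k, ?_, ?_⟩
  · by_contra h
    push_neg at h
    exact Nat.find_min hex (by omega) h
  · rw [hk] at hn; exact hn

lemma gRightCont {u : ℝ → Uv} {γ : ℝ → ℝ} (hu : PWCont u) (hγc : ContinuousOn γ (Ici 0))
    {x : ℝ} (hx : 0 ≤ x) : ContinuousWithinAt (fun s => γ ‖u s‖) (Ici x) x := by
  obtain ⟨σ, h0, hmono, hten, hpieces⟩ := hu
  obtain ⟨k, hk1, hk2⟩ := exists_piece' σ h0 hten hx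
  obtain ⟨v, hvc, hveq⟩ := hpieces k
  have hmemIco : Ico (σ k) (σ (k+1)) ∈ nhdsWithin x (Ici x) :=
    mem_nhdsWithin.2 ⟨Iio (σ (k+1)), isOpen_Iio, hk2, fun s hs => ⟨hk1.trans hs.2, hs.1⟩⟩
  have hvw : ContinuousWithinAt (fun s => γ ‖v s‖) (Ici x) x := by
    have h1 : ContinuousWithinAt v (Icc (σ k) (σ (k+1))) x := hvc x ⟨hk1, hk2.le⟩
    have h2 : ContinuousWithinAt v (Ici x) x :=
      h1.mono_of_mem_nhdsWithin (mem_of_superset hmemIco Ico_subset_Icc_self)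
    have h3 : ContinuousWithinAt (fun s => ‖v s‖) (Ici x) x := h2.norm
    have h4 : ContinuousWithinAt γ (Ici 0) ‖v x‖ := hγc _ (norm_nonneg _)
    have := ContinuousWithinAt.comp (g := γ) (f := fun s => ‖v s‖) (t := Ici 0) h4 h3
      (fun s _ => norm_nonneg _)
    exact this
  apply hvw.congr_of_eventuallyEq
  · exact Filter.eventually_of_mem hmemIco
      (fun s hs => show γ ‖u s‖ = γ ‖v s‖ by rw [hveq s hs])
  · rw [hveq x ⟨hk1, hk2⟩]

lemma gIntegrable {u : ℝ → Uv} {γ : ℝ → ℝ} (hu : PWCont u) (hγc : ContinuousOn γ (Ici 0))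
    (b : ℝ) : IntegrableOn (fun s => γ ‖u s‖) (Icc 0 b) volume := by
  obtain ⟨σ, h0, hmono, hten, hpieces⟩ := hu
  obtain ⟨n, hn⟩ := (hten.eventually (eventually_ge_atTop b)).exists
  have key : ∀ m : ℕ, IntegrableOn (fun s => γ ‖u s‖) (Icc 0 (σ m)) volume := by
    intro m
    induction m with
    | zero =>
      rw [h0, Icc_self]
      have hz : (volume : Measure ℝ).restrict ({(0:ℝ)} : Set ℝ) = 0 := by
        rw [Measure.restrict_eq_zero]; exact measure_singleton 0
      unfold IntegrableOn
      rw [hz]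
      exact integrable_zero_measure
    | succ m ih =>
      have hpi : IntegrableOn (fun s => γ ‖u s‖) (Icc (σ m) (σ (m+1))) volume := by
        obtain ⟨v, hvc, hveq⟩ := hpieces m
        have hcv : ContinuousOn (fun s => γ ‖v s‖) (Icc (σ m) (σ (m+1))) :=
          hγc.comp (continuous_norm.comp_continuousOn hvc) (fun s _ => norm_nonneg _)
        have hint := hcv.integrableOn_Icc (μ := volume)
        refine hint.congr ?_
        rw [EventuallyEq, ae_restrict_iff' measurableSet_Icc, ae_iff]
        refine measure_mono_null (fun s hs => ?_) (measure_singleton (σ (m+1)))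
        simp only [mem_setOf_eq, Classical.not_imp] at hs
        obtain ⟨hmem, hne⟩ := hs
        simp only [mem_singleton_iff]
        by_contra hne2
        exact hne (by rw [hveq s ⟨hmem.1, lt_of_le_of_ne hmem.2 hne2⟩])
      have hsub : Icc 0 (σ (m+1)) ⊆ Icc 0 (σ m) ∪ Icc (σ m) (σ (m+1)) := by
        intro s hs
        rcases le_total s (σ m) with h | h
        · exact Or.inl ⟨hs.1, h⟩
        · exact Or.inr ⟨h, hs.2⟩
      exact (ih.union hpi).mono_set hsub
  exact (key n).mono_set (Icc_subset_Icc le_rfl hn)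

lemma gronwall_aux {t0 T : ℝ} (h0T : t0 ≤ T) {g y : ℝ → ℝ}
    (hgint : IntervalIntegrable g volume t0 T)
    (hgnn : ∀ s, 0 ≤ g s)
    (hgd : ∀ z ∈ Ico t0 T, HasDerivWithinAt (fun t => ∫ s in t0..t, g s) (g z) (Ioi z) z)
    (hy : ContinuousOn y (Icc t0 T))
    {c D B : ℝ} (hD : 0 ≤ D) (hB : 0 ≤ B)
    (hineq : ∀ t ∈ Icc t0 T,
      y t ≤ c + D * (∫ s in t0..t, g s) + B * ∫ s in t0..t, g s * y s) :
    ∀ t ∈ Icc t0 T,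
      y t ≤ (c + D * ∫ s in t0..t, g s) * Real.exp (B * ∫ s in t0..t, g s) := by
  set G : ℝ → ℝ := fun t => ∫ s in t0..t, g s with hGdef
  have hgint' : ∀ a b : ℝ, a ∈ Icc t0 T → b ∈ Icc t0 T → IntervalIntegrable g volume a b := by
    intro a b ha hb
    exact hgint.mono_set (uIcc_subset_uIcc (by rwa [uIcc_of_le h0T])
      (by rwa [uIcc_of_le h0T]))
  have hGcont : ContinuousOn G (Icc t0 T) := by
    have h1 : IntegrableOn g (uIcc t0 T) volume := by
      rw [uIcc_of_le h0T]
      exact (intervalIntegrable_iff_integrableOn_Icc_of_le h0T).1 hgint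
    have := intervalIntegral.continuousOn_primitive_interval h1
    rwa [uIcc_of_le h0T] at this
  have hG0 : G t0 = 0 := intervalIntegral.integral_same
  have hGmono : ∀ a b : ℝ, a ∈ Icc t0 T → b ∈ Icc t0 T → a ≤ b → G a ≤ G b := by
    intro a b ha hb hab
    have hadd := intervalIntegral.integral_add_adjacent_intervals
      (hgint' t0 a ⟨le_rfl, h0T⟩ ha) (hgint' a b ha hb)
    have hnn : 0 ≤ ∫ s in a..b, g s :=
      intervalIntegral.integral_nonneg hab (fun s _ => hgnn s)
    have : G a + ∫ s in a..b, g s = G b := hadd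
    linarith
  have main : ∀ ε > (0:ℝ), ∀ t ∈ Icc t0 T,
      y t ≤ (c + ε + D * G t) * Real.exp (B * G t) := by
    intro ε hε
    by_contra hcon
    push_neg at hcon
    obtain ⟨t', ht', hbad'⟩ := hcon
    set Bad := {t | t ∈ Icc t0 T ∧ (c + ε + D * G t) * Real.exp (B * G t) < y t} with hBadDef
    have hne : Bad.Nonempty := ⟨t', ht', hbad'⟩
    have hbdd : BddBelow Bad := ⟨t0, fun s hs => hs.1.1⟩
    set t1 := sInf Bad with ht1def
    have ht1cl : t1 ∈ closure Bad := csInf_mem_closure hne hbdd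
    have hBadsub : Bad ⊆ Icc t0 T := fun s hs => hs.1
    have ht1mem : t1 ∈ Icc t0 T := by
      have := closure_mono hBadsub ht1cl
      rwa [isClosed_Icc.closure_eq] at this
    set h : ℝ → ℝ := fun t => (c + ε + D * G t) * Real.exp (B * G t) with hhdef
    have hhcont : ContinuousOn h (Icc t0 T) :=
      (continuousOn_const.add (continuousOn_const.mul hGcont)).mul
        (Real.continuous_exp.comp_continuousOn (continuousOn_const.mul hGcont))
    have hle1 : h t1 ≤ y t1 := by
      have hcw : ContinuousWithinAt (fun s => y s - h s) (Icc t0 T) t1 :=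
        (hy.sub hhcont) t1 ht1mem
      have hlim : Tendsto (fun s => y s - h s) (nhdsWithin t1 Bad) (nhds (y t1 - h t1)) :=
        hcw.mono_left (nhdsWithin_mono _ hBadsub)
      have hnb : (nhdsWithin t1 Bad).NeBot := mem_closure_iff_nhdsWithin_neBot.1 ht1cl
      have h0le : 0 ≤ y t1 - h t1 := by
        refine ge_of_tendsto hlim ?_
        filter_upwards [eventually_mem_nhdsWithin] with s hs
        exact le_of_lt (sub_pos.2 hs.2)
      linarith
    have hyh : ∀ s, t0 ≤ s → s < t1 → y s ≤ h s := by
      intro s hs1 hs2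
      by_contra hcon2
      push_neg at hcon2
      have hsmem : s ∈ Icc t0 T := ⟨hs1, hs2.le.trans ht1mem.2⟩
      exact absurd (csInf_le hbdd ⟨hsmem, hcon2⟩) (not_le.2 hs2)
    have h01 : t0 ≤ t1 := ht1mem.1
    have hsub1 : Icc t0 t1 ⊆ Icc t0 T := Icc_subset_Icc le_rfl ht1mem.2
    have hi_g : IntervalIntegrable g volume t0 t1 := hgint' _ _ ⟨le_rfl, h0T⟩ ht1mem
    have hi_gy : IntervalIntegrable (fun s => g s * y s) volume t0 t1 :=
      hi_g.mul_continuousOn (by rw [uIcc_of_le h01]; exact hy.mono hsub1)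
    have hi_gh : IntervalIntegrable (fun s => g s * h s) volume t0 t1 :=
      hi_g.mul_continuousOn (by rw [uIcc_of_le h01]; exact hhcont.mono hsub1)
    have hi_ge : IntervalIntegrable (fun s => g s * Real.exp (B * G s)) volume t0 t1 :=
      hi_g.mul_continuousOn (by
        rw [uIcc_of_le h01]
        exact Real.continuous_exp.comp_continuousOn
          (continuousOn_const.mul (hGcont.mono hsub1)))
    have s1 : (∫ s in t0..t1, g s * y s) ≤ ∫ s in t0..t1, g s * h s := by
      refine intervalIntegral.integral_mono_ae_restrict h01 hi_gy hi_gh ?_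
      rw [EventuallyLE, ae_restrict_iff' measurableSet_Icc, ae_iff]
      refine measure_mono_null (fun s hs => ?_) (measure_singleton t1)
      simp only [mem_setOf_eq, Classical.not_imp, not_le] at hs
      obtain ⟨hmem, hlt⟩ := hs
      simp only [mem_singleton_iff]
      by_contra hne2
      have hslt : s < t1 := lt_of_le_of_ne hmem.2 hne2
      have := mul_le_mul_of_nonneg_left (hyh s hmem.1 hslt) (hgnn s)
      linarith
    have s2 : (∫ s in t0..t1, g s * h s) ≤
        (c + ε + D * G t1) * ∫ s in t0..t1, g s * Real.exp (B * G s) := by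
      rw [← intervalIntegral.integral_const_mul]
      refine intervalIntegral.integral_mono_on h01 hi_gh (hi_ge.const_mul _) ?_
      intro s hsmem
      have hGs : G s ≤ G t1 := hGmono s t1 (hsub1 hsmem) ht1mem hsmem.2
      have hexp : (0:ℝ) < Real.exp (B * G s) := Real.exp_pos _
      have hfac : c + ε + D * G s ≤ c + ε + D * G t1 := by nlinarith
      calc g s * h s = (c + ε + D * G s) * (g s * Real.exp (B * G s)) := by
            simp only [hhdef]; ring
        _ ≤ (c + ε + D * G t1) * (g s * Real.exp (B * G s)) :=
            mul_le_mul_of_nonneg_right hfac (mul_nonneg (hgnn s) hexp.le)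
    have s3 : B * (∫ s in t0..t1, g s * Real.exp (B * G s)) = Real.exp (B * G t1) - 1 := by
      have hderiv : ∀ z ∈ Ioo t0 t1, HasDerivWithinAt (fun t => Real.exp (B * G t))
          (B * (g z * Real.exp (B * G z))) (Ioi z) z := by
        intro z hz
        have hzT : z ∈ Ico t0 T := ⟨hz.1.le, lt_of_lt_of_le hz.2 ht1mem.2⟩
        have hgz : HasDerivWithinAt G (g z) (Ioi z) z := hgd z hzT
        have h2 : HasDerivWithinAt (fun t => B * G t) (B * g z) (Ioi z) z := hgz.const_mul B
        have h3 := (Real.hasDerivAt_exp (B * G z)).comp_hasDerivWithinAt z h2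
        exact h3.congr_deriv (by ring)
      have hcont2 : ContinuousOn (fun t => Real.exp (B * G t)) (Icc t0 t1) :=
        Real.continuous_exp.comp_continuousOn (continuousOn_const.mul (hGcont.mono hsub1))
      have hint2 : IntervalIntegrable (fun s => B * (g s * Real.exp (B * G s))) volume t0 t1 :=
        hi_ge.const_mul B
      have hftc := intervalIntegral.integral_eq_sub_of_hasDeriv_right_of_le h01 hcont2
        hderiv hint2
      rw [intervalIntegral.integral_const_mul] at hftc
      rw [hftc, hG0]
      norm_num
    have hy1 := hineq t1 ht1mem
    have e1 : B * (∫ s in t0..t1, g s * y s) ≤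
        B * ((c + ε + D * G t1) * ∫ s in t0..t1, g s * Real.exp (B * G s)) :=
      mul_le_mul_of_nonneg_left (s1.trans s2) hB
    have e2 : B * ((c + ε + D * G t1) * ∫ s in t0..t1, g s * Real.exp (B * G s)) =
        (c + ε + D * G t1) * (B * ∫ s in t0..t1, g s * Real.exp (B * G s)) := by ring
    rw [e2, s3] at e1
    have e3 : (c + ε + D * G t1) * (Real.exp (B * G t1) - 1) =
        (c + ε + D * G t1) * Real.exp (B * G t1) - c - ε - D * G t1 := by ring
    have final : y t1 ≤ h t1 - ε := by
      show y t1 ≤ (c + ε + D * G t1) * Real.exp (B * G t1) - ε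
      linarith
    linarith
  intro t ht
  refine le_of_forall_pos_le_add (fun δ hδ => ?_)
  have hE : (0:ℝ) < Real.exp (B * G t) := Real.exp_pos _
  have hm := main (δ / Real.exp (B * G t)) (div_pos hδ hE) t ht
  have heq : (c + δ / Real.exp (B * G t) + D * G t) * Real.exp (B * G t) =
      (c + D * G t) * Real.exp (B * G t) + δ := by
    field_simp
    ring
  calc y t ≤ (c + δ / Real.exp (B * G t) + D * G t) * Real.exp (B * G t) := hm
    _ = (c + D * G t) * Real.exp (B * G t) + δ := heq

end GronwallAux

/-- The a priori bound in the proof of Theorem 5.7: for a semilinear system with an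
exponentially stable semigroup (`‖T(t)‖ ≤ M e^{-λt}`) and the generalized bilinear bound
`‖f(t,ξ,μ)‖ ≤ (K‖ξ‖ + d)·γ(‖μ‖)`, every mild solution satisfies
`‖x(τ)‖ ≤ M[‖x0‖ + d∫γ(‖u‖)] exp(MK∫γ(‖u‖))`. -/


theorem bilinear_apriori_bound (Tg : C0Semigroup X) (f : ℝ → X → Uv → X)
    (M lam : ℝ) (hM : 1 ≤ M) (hlam : 0 < lam)
    (hT : ∀ t ≥ (0:ℝ), ‖Tg.T t‖ ≤ M * Real.exp (-lam * t))
    (K d : ℝ) (hK : 0 ≤ K) (hd : 0 ≤ d) (γ : ℝ → ℝ) (hγ : ClassKInf γ)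
    (hbound : ∀ t ≥ (0:ℝ), ∀ (ξ : X) (μ : Uv), ‖f t ξ μ‖ ≤ (K * ‖ξ‖ + d) * γ ‖μ‖) :
    ∀ t0 ≥ (0:ℝ), ∀ u : ℝ → Uv, PWCont u → ∀ T ≥ t0, ∀ x : ℝ → X,
      IsMild Tg f u t0 T x →
      ∀ t ∈ Icc t0 T,
        ‖x t‖ ≤ M * (‖x t0‖ + d * ∫ s in t0..t, γ ‖u s‖) *
          Real.exp (M * K * ∫ s in t0..t, γ ‖u s‖) := by
  intro t0 ht0 u hu T hTt0 x hmild t ht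
  have hγc : ContinuousOn γ (Ici 0) := hγ.1.1
  have hγm : MonotoneOn γ (Ici 0) := hγ.1.2.1.monotoneOn
  have hγ0 : γ 0 = 0 := hγ.1.2.2
  have hgnn : ∀ s : ℝ, 0 ≤ γ ‖u s‖ := by
    intro s
    have := hγm self_mem_Ici (norm_nonneg (u s)) (norm_nonneg (u s))
    rwa [hγ0] at this
  have hM0 : (0:ℝ) ≤ M := by linarith
  have hgT : IntervalIntegrable (fun s => γ ‖u s‖) volume t0 T := by
    refine IntegrableOn.intervalIntegrable ?_
    rw [uIcc_of_le hTt0]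
    exact (gIntegrable hu hγc T).mono_set (Icc_subset_Icc ht0 le_rfl)
  have hgint' : ∀ a b : ℝ, t0 ≤ a → a ≤ b → b ≤ T →
      IntervalIntegrable (fun s => γ ‖u s‖) volume a b := by
    intro a b ha hab hb
    refine hgT.mono_set (uIcc_subset_uIcc ?_ ?_) <;> rw [uIcc_of_le hTt0]
    · exact ⟨ha, hab.trans hb⟩
    · exact ⟨ha.trans hab, hb⟩
  have hgd : ∀ z ∈ Ico t0 T, HasDerivWithinAt (fun r => ∫ s in t0..r, γ ‖u s‖)
      (γ ‖u z‖) (Ioi z) z := by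
    intro z hz
    have hz0 : (0:ℝ) ≤ z := le_trans ht0 hz.1
    have hcz : ContinuousWithinAt (fun s => γ ‖u s‖) (Ici z) z := gRightCont hu hγc hz0
    have hiz : IntervalIntegrable (fun s => γ ‖u s‖) volume t0 z :=
      hgint' t0 z le_rfl hz.1 hz.2.le
    have hmeas : StronglyMeasurableAtFilter (fun s => γ ‖u s‖) (nhdsWithin z (Ioi z)) volume := by
      refine ⟨Icc 0 (z+1), ?_, (gIntegrable hu hγc (z+1)).aestronglyMeasurable⟩
      exact mem_nhdsWithin.2 ⟨Iio (z+1), isOpen_Iio, by simp, fun s hs =>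
        ⟨hz0.trans (le_of_lt hs.2), hs.1.le⟩⟩
    have hd1 : HasDerivWithinAt (fun r => ∫ s in t0..r, γ ‖u s‖) (γ ‖u z‖) (Ici z) z :=
      intervalIntegral.integral_hasDerivWithinAt_right hiz hmeas
        (hcz.mono Ioi_subset_Ici_self)
    exact hd1.mono Ioi_subset_Ici_self
  have hy : ContinuousOn (fun s => ‖x s‖) (Icc t0 T) := hmild.1.norm
  have key : ∀ r ∈ Icc t0 T, ‖x r‖ ≤ M * ‖x t0‖ + (M*d) * (∫ s in t0..r, γ ‖u s‖) +
      (M*K) * ∫ s in t0..r, γ ‖u s‖ * ‖x s‖ := by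
    intro r hr
    have hr0 : t0 ≤ r := hr.1
    have hx_eq := hmild.2 r hr
    have hgr : IntervalIntegrable (fun s => γ ‖u s‖) volume t0 r :=
      hgint' t0 r le_rfl hr0 hr.2
    have hyc : ContinuousOn (fun s => M * (K * ‖x s‖ + d)) (uIcc t0 r) := by
      rw [uIcc_of_le hr0]
      exact continuousOn_const.mul ((continuousOn_const.mul
        (hy.mono (Icc_subset_Icc le_rfl hr.2))).add continuousOn_const)
    have hbig : IntervalIntegrable (fun s => M * ((K * ‖x s‖ + d) * γ ‖u s‖)) volume t0 r := by
      have h1 := hgr.continuousOn_mul hyc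
      have heq : (fun s => M * (K * ‖x s‖ + d) * γ ‖u s‖) =
          fun s => M * ((K * ‖x s‖ + d) * γ ‖u s‖) := by funext s; ring
      rwa [heq] at h1
    have h1 : ‖Tg.T (r - t0) (x t0)‖ ≤ M * ‖x t0‖ := by
      have hTt := hT (r - t0) (by linarith)
      have hee : Real.exp (-lam * (r - t0)) ≤ 1 := by
        rw [Real.exp_le_one_iff]
        have := mul_nonneg hlam.le (sub_nonneg.2 hr0)
        linarith
      calc ‖Tg.T (r - t0) (x t0)‖ ≤ ‖Tg.T (r - t0)‖ * ‖x t0‖ :=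
            ContinuousLinearMap.le_opNorm _ _
        _ ≤ (M * Real.exp (-lam * (r - t0))) * ‖x t0‖ :=
            mul_le_mul_of_nonneg_right hTt (norm_nonneg _)
        _ ≤ M * ‖x t0‖ := by
            nlinarith [mul_nonneg (mul_nonneg hM0 (norm_nonneg (x t0))) (sub_nonneg.2 hee)]
    have h2 : ‖∫ s in t0..r, Tg.T (r - s) (f s (x s) (u s))‖ ≤
        ∫ s in t0..r, M * ((K * ‖x s‖ + d) * γ ‖u s‖) := by
      have hnnint : 0 ≤ ∫ s in t0..r, M * ((K * ‖x s‖ + d) * γ ‖u s‖) :=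
        intervalIntegral.integral_nonneg hr0 (fun s _ => mul_nonneg hM0
          (mul_nonneg (add_nonneg (mul_nonneg hK (norm_nonneg _)) hd) (hgnn s)))
      refine (intervalIntegral.norm_integral_le_abs_of_norm_le ?_ hbig).trans
        (le_of_eq (abs_of_nonneg hnnint))
      rw [uIoc_of_le hr0]
      filter_upwards [ae_restrict_mem measurableSet_Ioc] with s hs
      have hs0 : (0:ℝ) ≤ s := le_of_lt (lt_of_le_of_lt ht0 hs.1)
      have hfb := hbound s hs0 (x s) (u s)
      have hTs := hT (r - s) (by linarith [hs.2])
      have hP : (0:ℝ) ≤ (K * ‖x s‖ + d) * γ ‖u s‖ :=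
        mul_nonneg (add_nonneg (mul_nonneg hK (norm_nonneg _)) hd) (hgnn s)
      have hMe : (0:ℝ) ≤ M * Real.exp (-lam * (r - s)) :=
        mul_nonneg hM0 (Real.exp_pos _).le
      have hee : Real.exp (-lam * (r - s)) ≤ 1 := by
        rw [Real.exp_le_one_iff]
        have := mul_nonneg hlam.le (sub_nonneg.2 hs.2)
        linarith
      calc ‖Tg.T (r - s) (f s (x s) (u s))‖
          ≤ ‖Tg.T (r - s)‖ * ‖f s (x s) (u s)‖ := ContinuousLinearMap.le_opNorm _ _
        _ ≤ (M * Real.exp (-lam * (r - s))) * ((K * ‖x s‖ + d) * γ ‖u s‖) :=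
            mul_le_mul hTs hfb (norm_nonneg _) hMe
        _ ≤ M * ((K * ‖x s‖ + d) * γ ‖u s‖) := by
            have hprod := mul_nonneg (mul_nonneg hM0 hP) (sub_nonneg.2 hee)
            nlinarith
    have hgy : IntervalIntegrable (fun s => γ ‖u s‖ * ‖x s‖) volume t0 r :=
      hgr.mul_continuousOn (by
        rw [uIcc_of_le hr0]; exact hy.mono (Icc_subset_Icc le_rfl hr.2))
    have h3 : (∫ s in t0..r, M * ((K * ‖x s‖ + d) * γ ‖u s‖)) =
        (M*d) * (∫ s in t0..r, γ ‖u s‖) + (M*K) * ∫ s in t0..r, γ ‖u s‖ * ‖x s‖ := by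
      rw [intervalIntegral.integral_congr
        (g := fun s => (M*d) * (γ ‖u s‖) + (M*K) * (γ ‖u s‖ * ‖x s‖))
        (fun s _ => by ring)]
      rw [intervalIntegral.integral_add (hgr.const_mul _) (hgy.const_mul _),
        intervalIntegral.integral_const_mul, intervalIntegral.integral_const_mul]
    calc ‖x r‖ = ‖Tg.T (r - t0) (x t0) + ∫ s in t0..r, Tg.T (r - s) (f s (x s) (u s))‖ := by
          rw [hx_eq]
      _ ≤ ‖Tg.T (r - t0) (x t0)‖ + ‖∫ s in t0..r, Tg.T (r - s) (f s (x s) (u s))‖ :=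
          norm_add_le _ _
      _ ≤ M * ‖x t0‖ + ∫ s in t0..r, M * ((K * ‖x s‖ + d) * γ ‖u s‖) := add_le_add h1 h2
      _ = M * ‖x t0‖ + ((M*d) * (∫ s in t0..r, γ ‖u s‖) +
          (M*K) * ∫ s in t0..r, γ ‖u s‖ * ‖x s‖) := by rw [h3]
      _ = M * ‖x t0‖ + (M*d) * (∫ s in t0..r, γ ‖u s‖) +
          (M*K) * ∫ s in t0..r, γ ‖u s‖ * ‖x s‖ := by ring
  have happ := gronwall_aux hTt0 hgT hgnn hgd hy (c := M * ‖x t0‖)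
    (mul_nonneg hM0 hd) (mul_nonneg hM0 hK) key t ht
  have hrw : M * (‖x t0‖ + d * ∫ s in t0..t, γ ‖u s‖) =
      M * ‖x t0‖ + (M*d) * ∫ s in t0..t, γ ‖u s‖ := by ring
  rw [hrw]
  exact happ
end
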